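/- Let S be a monoid and let A be an S-act whose unique decomposition into indecomposable subacts is A = ⨆_{i∈I} A_i. For i, j ∈ I define i ∼ j if and only if A_i ≅ A_j, and assume the quotient set I/∼ is finite. Then A is cancellable if and only if A is finitely decomposable (i.e., I is finite). -/

import Mathlib

universe u v w

/-- A right `S`-act structure on a type `A`: a map `A × S → A`, `(a, s) ↦ a · s`,
with `a · 1 = a` and `a · (s*t) = (a · s) · t`. (`S`-acts are additionally required
to be nonempty; this is imposed via `Nonempty` hypotheses.) -/
class RAct (S : Type u) [Monoid S] (A : Type v) : Type (max u v) where
  act : A → S → A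
  act_one : ∀ a : A, act a 1 = a
  act_mul : ∀ (a : A) (s t : S), act a (s * t) = act (act a s) t

/-- Isomorphism of `S`-acts: a bijective action-preserving map. -/
def ActIso (S : Type u) [Monoid S] (A : Type v) (B : Type w) [RAct S A] [RAct S B] : Prop :=
  ∃ e : A ≃ B, ∀ (a : A) (s : S), e (RAct.act a s) = RAct.act (e a) s

/-- The coproduct (disjoint union) of two `S`-acts, with componentwise action. -/
instance sumRAct (S : Type u) [Monoid S] (A : Type v) (B : Type w) [RAct S A] [RAct S B] :
    RAct S (A ⊕ B) where
  act x s := Sum.map (fun a => RAct.act a s) (fun b => RAct.act b s) x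
  act_one := by rintro (a | b) <;> simp [RAct.act_one]
  act_mul := by rintro (a | b) s t <;> simp [RAct.act_mul]

/-- An `S`-act `A` is cancellable if `A ⊔ B ≅ A ⊔ C` implies `B ≅ C`
for all `S`-acts `B`, `C`. -/
def Cancellable (S : Type u) [Monoid S] (A : Type u) [RAct S A] : Prop :=
  ∀ (B C : Type u) [RAct S B] [RAct S C] [Nonempty B] [Nonempty C],
    ActIso S (A ⊕ B) (A ⊕ C) → ActIso S B C

/-- A subact of an `S`-act: a nonempty subset closed under the action. -/
def IsSubact (S : Type u) [Monoid S] {A : Type v} [RAct S A] (T : Set A) : Prop :=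
  T.Nonempty ∧ ∀ a ∈ T, ∀ s : S, RAct.act a s ∈ T

/-- The induced `S`-act structure on a subact. -/
def IsSubact.ract {S : Type u} [Monoid S] {A : Type v} [RAct S A] {T : Set A}
    (hT : IsSubact S T) : RAct S T where
  act a s := ⟨RAct.act a.1 s, hT.2 a.1 a.2 s⟩
  act_one a := Subtype.ext (RAct.act_one a.1)
  act_mul a s t := Subtype.ext (RAct.act_mul a.1 s t)

/-- Two subacts are isomorphic if they are isomorphic as `S`-acts with the
induced actions. -/
def SubactIso {S : Type u} [Monoid S] {A : Type v} {A' : Type w} [RAct S A] [RAct S A']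
    {T : Set A} {U : Set A'} (hT : IsSubact S T) (hU : IsSubact S U) : Prop :=
  @ActIso S _ T U hT.ract hU.ract

/-- A subact `T` is indecomposable if it is not the disjoint union of two subacts. -/
def IndecompSubact (S : Type u) [Monoid S] {A : Type v} [RAct S A] (T : Set A) : Prop :=
  IsSubact S T ∧
    ¬ ∃ U V : Set A, IsSubact S U ∧ IsSubact S V ∧ U ∪ V = T ∧ U ∩ V = ∅

section Theory

variable {S : Type u} [Monoid S]

@[simp] theorem act_inl {A : Type v} {B : Type w} [RAct S A] [RAct S B] (a : A) (s : S) :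
    RAct.act (Sum.inl a : A ⊕ B) s = Sum.inl (RAct.act a s) := rfl

@[simp] theorem act_inr {A : Type v} {B : Type w} [RAct S A] [RAct S B] (b : B) (s : S) :
    RAct.act (Sum.inr b : A ⊕ B) s = Sum.inr (RAct.act b s) := rfl

/-- `S`-act structure on a sigma type with acting fibers. -/
instance sigmaRAct {I : Type v} (F : I → Type w) [∀ i, RAct S (F i)] :
    RAct S (Σ i, F i) where
  act x s := ⟨x.1, RAct.act x.2 s⟩
  act_one x := by cases x; simp [RAct.act_one]
  act_mul x s t := by cases x; simp [RAct.act_mul]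

/-- `S`-act structure on a product with a passive first factor. -/
instance prodRAct (γ : Type v) (B : Type w) [RAct S B] : RAct S (γ × B) where
  act x s := (x.1, RAct.act x.2 s)
  act_one x := by simp [RAct.act_one]
  act_mul x s t := by simp [RAct.act_mul]

@[simp] theorem act_sigma {I : Type v} {F : I → Type w} [∀ i, RAct S (F i)]
    (i : I) (x : F i) (s : S) :
    RAct.act (⟨i, x⟩ : Σ j, F j) s = ⟨i, RAct.act x s⟩ := rfl

@[simp] theorem act_prod {γ : Type v} {B : Type w} [RAct S B] (g : γ) (b : B) (s : S) :
    RAct.act ((g, b) : γ × B) s = (g, RAct.act b s) := rfl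

theorem val_act_ract {A : Type v} [RAct S A] {T : Set A} (hT : IsSubact S T)
    (x : T) (s : S) :
    (@RAct.act S _ T hT.ract x s).val = RAct.act x.val s := rfl

/-- A map between `S`-acts is equivariant if it commutes with the action. -/
def IsEquivariant (S : Type u) [Monoid S] {A : Type v} {B : Type w}
    [RAct S A] [RAct S B] (f : A → B) : Prop :=
  ∀ (a : A) (s : S), f (RAct.act a s) = RAct.act (f a) s

theorem equivariant_refl {A : Type v} [RAct S A] : IsEquivariant S ⇑(Equiv.refl A) :=
  fun _ _ => rfl

theorem equivariant_symm {A : Type v} {B : Type w} [RAct S A] [RAct S B] {e : A ≃ B}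
    (he : IsEquivariant S ⇑e) : IsEquivariant S ⇑e.symm := by
  intro b s
  apply e.injective
  rw [Equiv.apply_symm_apply, he, Equiv.apply_symm_apply]

theorem equivariant_trans {A : Type v} {B : Type w} {C : Type u_1}
    [RAct S A] [RAct S B] [RAct S C] {e : A ≃ B} {f : B ≃ C}
    (he : IsEquivariant S ⇑e) (hf : IsEquivariant S ⇑f) :
    IsEquivariant S ⇑(e.trans f) := by
  intro a s
  simp only [Equiv.trans_apply, he a s, hf (e a) s]

theorem equivariant_sumCongr {A B C D : Type*} [RAct S A] [RAct S B] [RAct S C] [RAct S D]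
    {e : A ≃ B} {f : C ≃ D} (he : IsEquivariant S ⇑e) (hf : IsEquivariant S ⇑f) :
    IsEquivariant S ⇑(e.sumCongr f) := by
  rintro (a | c) s <;> simp [he _ s, hf _ s]

theorem equivariant_sumComm (A : Type v) (B : Type w) [RAct S A] [RAct S B] :
    IsEquivariant S ⇑(Equiv.sumComm A B) := by
  rintro (a | b) s <;> rfl

theorem equivariant_sumAssoc (A B C : Type*) [RAct S A] [RAct S B] [RAct S C] :
    IsEquivariant S ⇑(Equiv.sumAssoc A B C) := by
  rintro ((a | b) | c) s <;> rfl

theorem equivariant_inl {A : Type v} {B : Type w} [RAct S A] [RAct S B] :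
    IsEquivariant S (Sum.inl : A → A ⊕ B) := fun _ _ => rfl

/-- Connectedness relation on an `S`-act. -/
inductive Conn (S : Type u) [Monoid S] {A : Type v} [RAct S A] : A → A → Prop
  | act : ∀ (a : A) (s : S), Conn S a (RAct.act a s)
  | refl : ∀ a : A, Conn S a a
  | symm : ∀ {a b : A}, Conn S a b → Conn S b a
  | trans : ∀ {a b c : A}, Conn S a b → Conn S b c → Conn S a c

theorem conn_map {A : Type v} {B : Type w} [RAct S A] [RAct S B] {f : A → B}
    (hf : IsEquivariant S f) {a b : A} (h : Conn S a b) : Conn S (f a) (f b) := by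
  induction h with
  | act a s => rw [hf]; exact Conn.act _ _
  | refl a => exact Conn.refl _
  | symm _ ih => exact ih.symm
  | trans _ _ ih1 ih2 => exact ih1.trans ih2

/-- An act is connected iff any two points are connected. -/
def ConnTotal (S : Type u) [Monoid S] (A : Type v) [RAct S A] : Prop :=
  ∀ a b : A, Conn S a b

theorem connTotal_of_surjective {A : Type v} {B : Type w} [RAct S A] [RAct S B]
    {f : A → B} (hf : IsEquivariant S f) (hs : Function.Surjective f)
    (h : ConnTotal S A) : ConnTotal S B := by
  intro b b'
  obtain ⟨a, rfl⟩ := hs b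
  obtain ⟨a', rfl⟩ := hs b'
  exact conn_map hf (h a a')

theorem conn_isLeft {A : Type v} {B : Type w} [RAct S A] [RAct S B]
    {x y : A ⊕ B} (h : Conn S x y) : x.isLeft = y.isLeft := by
  induction h with
  | act x s => cases x <;> rfl
  | refl => rfl
  | symm _ ih => exact ih.symm
  | trans _ _ ih1 ih2 => exact ih1.trans ih2

theorem not_connTotal_sum {A : Type v} {B : Type w} [RAct S A] [RAct S B]
    [Nonempty A] [Nonempty B] : ¬ ConnTotal S (A ⊕ B) := by
  intro h
  obtain ⟨a⟩ := ‹Nonempty A›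
  obtain ⟨b⟩ := ‹Nonempty B›
  simpa using conn_isLeft (h (Sum.inl a) (Sum.inr b))

theorem connTotal_of_no_split {A : Type v} [RAct S A] [Nonempty A]
    (h : ¬ ∃ U V : Set A, IsSubact S U ∧ IsSubact S V ∧ U ∪ V = Set.univ ∧ U ∩ V = ∅) :
    ConnTotal S A := by
  by_contra hc
  unfold ConnTotal at hc
  push_neg at hc
  obtain ⟨a, b, hab⟩ := hc
  refine h ⟨{x | Conn S a x}, {x | ¬ Conn S a x}, ⟨⟨a, Conn.refl a⟩, ?_⟩, ⟨⟨b, hab⟩, ?_⟩, ?_, ?_⟩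
  · intro x hx s
    exact hx.trans (Conn.act x s)
  · intro x hx s hxs
    exact hx (hxs.trans (Conn.act x s).symm)
  · ext x; by_cases hx : Conn S a x <;> simp [hx]
  · ext x; by_cases hx : Conn S a x <;> simp [hx]

theorem connTotal_of_indecomp {A : Type v} [RAct S A] {T : Set A}
    (h : IndecompSubact S T) : @ConnTotal S _ T h.1.ract := by
  letI := h.1.ract
  haveI : Nonempty T := h.1.1.to_subtype
  apply connTotal_of_no_split
  rintro ⟨U, V, hU, hV, huv, hdis⟩
  refine h.2 ⟨Subtype.val '' U, Subtype.val '' V, ?_, ?_, ?_, ?_⟩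
  · refine ⟨hU.1.image _, ?_⟩
    rintro _ ⟨u, hu, rfl⟩ s
    exact ⟨_, hU.2 u hu s, rfl⟩
  · refine ⟨hV.1.image _, ?_⟩
    rintro _ ⟨v, hv, rfl⟩ s
    exact ⟨_, hV.2 v hv s, rfl⟩
  · rw [← Set.image_union, huv, Set.image_univ, Subtype.range_val]
  · rw [← Set.image_inter Subtype.val_injective, hdis, Set.image_empty]
/-- The key cancellation lemma: a connected act can be cancelled from a coproduct. -/
theorem actIso_cancel_of_connTotal {A : Type v} {B : Type w} {C : Type u_1}
    [RAct S A] [RAct S B] [RAct S C] [Nonempty A]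
    (hA : ConnTotal S A) (h : ActIso S (A ⊕ B) (A ⊕ C)) : ActIso S B C := by
  obtain ⟨e, he'⟩ := h
  have he : IsEquivariant S ⇑e := he'
  have hesymm : IsEquivariant S ⇑e.symm := equivariant_symm he
  have hconnC : ∀ a a' : A, Conn S (e (Sum.inl a)) (e (Sum.inl a')) := fun a a' =>
    conn_map he (conn_map (equivariant_inl (B := B)) (hA a a'))
  have hconnB : ∀ a a' : A, Conn S (e.symm (Sum.inl a)) (e.symm (Sum.inl a')) := fun a a' =>
    conn_map hesymm (conn_map (equivariant_inl (B := C)) (hA a a'))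
  obtain ⟨a₀⟩ := ‹Nonempty A›
  rcases h0 : e (Sum.inl a₀) with a₁ | c₀
  · -- Case 1 : `e` maps the `A`-component to the `A`-component
    have hL : ∀ a : A, ∃ a', e (Sum.inl a) = Sum.inl a' := by
      intro a
      have hc := conn_isLeft (hconnC a a₀)
      rw [h0] at hc
      rcases hh : e (Sum.inl a) with x | x
      · exact ⟨x, rfl⟩
      · rw [hh] at hc; simp at hc
    have hR : ∀ a : A, ∃ a', e.symm (Sum.inl a) = Sum.inl a' := by
      intro a
      have h1 : e.symm (Sum.inl a₁) = Sum.inl a₀ := by rw [← h0, Equiv.symm_apply_apply]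
      have hc := conn_isLeft (hconnB a a₁)
      rw [h1] at hc
      rcases hh : e.symm (Sum.inl a) with x | x
      · exact ⟨x, rfl⟩
      · rw [hh] at hc; simp at hc
    have hBC : ∀ b : B, ∃ c : C, e (Sum.inr b) = Sum.inr c := by
      intro b
      rcases hh : e (Sum.inr b) with a | c
      · obtain ⟨a', ha'⟩ := hR a
        have hx : e.symm (Sum.inl a) = Sum.inr b := by rw [← hh, Equiv.symm_apply_apply]
        rw [hx] at ha'; simp at ha'
      · exact ⟨c, rfl⟩
    have hCB : ∀ c : C, ∃ b : B, e.symm (Sum.inr c) = Sum.inr b := by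
      intro c
      rcases hh : e.symm (Sum.inr c) with a | b
      · obtain ⟨a', ha'⟩ := hL a
        have hx : e (Sum.inl a) = Sum.inr c := by rw [← hh, Equiv.apply_symm_apply]
        rw [hx] at ha'; simp at ha'
      · exact ⟨b, rfl⟩
    choose f hf using hBC
    choose g hg using hCB
    refine ⟨⟨f, g, ?_, ?_⟩, ?_⟩
    · intro b
      have hx : e.symm (Sum.inr (f b)) = Sum.inr b := by rw [← hf, Equiv.symm_apply_apply]
      have h2 := hg (f b)
      rw [hx] at h2
      exact (Sum.inr_injective h2).symm
    · intro c
      have hx : e (Sum.inr (g c)) = Sum.inr c := by rw [← hg, Equiv.apply_symm_apply]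
      have h2 := hf (g c)
      rw [hx] at h2
      exact (Sum.inr_injective h2).symm
    · intro b s
      apply Sum.inr_injective (α := A)
      calc (Sum.inr (f (RAct.act b s)) : A ⊕ C)
          = e (Sum.inr (RAct.act b s)) := (hf _).symm
        _ = e (RAct.act (Sum.inr b) s) := rfl
        _ = RAct.act (e (Sum.inr b)) s := he _ _
        _ = RAct.act (Sum.inr (f b)) s := by rw [hf]
        _ = Sum.inr (RAct.act (f b) s) := rfl
  · -- Case 2 : `e` maps the `A`-component into `C`
    have hF : ∀ a : A, ∃ c, e (Sum.inl a) = Sum.inr c := by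
      intro a
      have hc := conn_isLeft (hconnC a a₀)
      rw [h0] at hc
      rcases hh : e (Sum.inl a) with x | x
      · rw [hh] at hc; simp at hc
      · exact ⟨x, rfl⟩
    have hG : ∀ a : A, ∃ b, e.symm (Sum.inl a) = Sum.inr b := by
      intro a
      rcases hh : e.symm (Sum.inl a) with a' | b
      · obtain ⟨c, hc⟩ := hF a'
        have hx : e (Sum.inl a') = Sum.inl a := by rw [← hh, Equiv.apply_symm_apply]
        rw [hx] at hc; simp at hc
      · exact ⟨b, rfl⟩
    choose f hf using hF
    choose g hg using hG
    have hfs : ∀ (a : A) (s : S), f (RAct.act a s) = RAct.act (f a) s := by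
      intro a s
      apply Sum.inr_injective (α := A)
      calc (Sum.inr (f (RAct.act a s)) : A ⊕ C)
          = e (Sum.inl (RAct.act a s)) := (hf _).symm
        _ = e (RAct.act (Sum.inl a) s) := rfl
        _ = RAct.act (e (Sum.inl a)) s := he _ _
        _ = RAct.act (Sum.inr (f a)) s := by rw [hf]
        _ = Sum.inr (RAct.act (f a) s) := rfl
    refine ⟨⟨fun b => Sum.elim f id (e (Sum.inr b)),
             fun c => Sum.elim g id (e.symm (Sum.inr c)), ?_, ?_⟩, ?_⟩
    · intro b
      rcases hh : e (Sum.inr b) with a | c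
      · simp only [hh, Sum.elim_inl]
        rw [← hf a, Equiv.symm_apply_apply]
        simp only [Sum.elim_inl]
        have hx : e.symm (Sum.inl a) = Sum.inr b := by rw [← hh, Equiv.symm_apply_apply]
        have h2 := hg a
        rw [hx] at h2
        exact (Sum.inr_injective h2).symm
      · simp only [hh, Sum.elim_inr, id]
        have hx : e.symm (Sum.inr c) = Sum.inr b := by rw [← hh, Equiv.symm_apply_apply]
        rw [hx]
        rfl
    · intro c
      rcases hh : e.symm (Sum.inr c) with a | b
      · simp only [hh, Sum.elim_inl]
        rw [← hg a, Equiv.apply_symm_apply]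
        simp only [Sum.elim_inl]
        have hx : e (Sum.inl a) = Sum.inr c := by rw [← hh, Equiv.apply_symm_apply]
        have h2 := hf a
        rw [hx] at h2
        exact (Sum.inr_injective h2).symm
      · simp only [hh, Sum.elim_inr, id]
        have hx : e (Sum.inr b) = Sum.inr c := by rw [← hh, Equiv.apply_symm_apply]
        rw [hx]
        rfl
    · intro b s
      show Sum.elim f id (e (Sum.inr (RAct.act b s)))
          = RAct.act (Sum.elim f id (e (Sum.inr b))) s
      have h1 : e (Sum.inr (RAct.act b s)) = RAct.act (e (Sum.inr b)) s := he (Sum.inr b) s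
      rw [h1]
      rcases hh : e (Sum.inr b) with a | c <;> simp [hfs]
theorem cancellable_of_connTotal {A : Type u} [RAct S A] [Nonempty A]
    (h : ConnTotal S A) : Cancellable S A := by
  intro B C _ _ _ _ hiso
  exact actIso_cancel_of_connTotal h hiso

theorem cancellable_congr {A A' : Type u} [RAct S A] [RAct S A'] {e : A ≃ A'}
    (he : IsEquivariant S ⇑e) (h : Cancellable S A') : Cancellable S A := by
  intro B C _ _ _ _ hiso
  obtain ⟨f, hf'⟩ := hiso
  have hf : IsEquivariant S ⇑f := hf'
  refine h B C ⟨(e.symm.sumCongr (Equiv.refl B)).trans (f.trans (e.sumCongr (Equiv.refl C))), ?_⟩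
  exact equivariant_trans (equivariant_sumCongr (equivariant_symm he) equivariant_refl)
    (equivariant_trans hf (equivariant_sumCongr he equivariant_refl))

theorem cancellable_sum {A₁ A₂ : Type u} [RAct S A₁] [RAct S A₂] [Nonempty A₁]
    (h1 : ConnTotal S A₁) (h2 : Cancellable S A₂) : Cancellable S (A₁ ⊕ A₂) := by
  intro B C _ _ _ _ hiso
  obtain ⟨f, hf'⟩ := hiso
  have hf : IsEquivariant S ⇑f := hf'
  have hiso2 : ActIso S (A₁ ⊕ (A₂ ⊕ B)) (A₁ ⊕ (A₂ ⊕ C)) := by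
    refine ⟨(Equiv.sumAssoc A₁ A₂ B).symm.trans (f.trans (Equiv.sumAssoc A₁ A₂ C)), ?_⟩
    exact equivariant_trans (equivariant_symm (equivariant_sumAssoc A₁ A₂ B))
      (equivariant_trans hf (equivariant_sumAssoc A₁ A₂ C))
  exact h2 B C (actIso_cancel_of_connTotal h1 hiso2)

/-- Reverse direction: a finitely decomposable act is cancellable. -/
theorem cancellable_of_finite (n : ℕ) :
    ∀ (A : Type u) [RAct S A] [Nonempty A] (I : Type u) (T : I → Set A),
      (∀ i, IndecompSubact S (T i)) → (∀ i j, i ≠ j → T i ∩ T j = ∅) →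
      (⋃ i, T i) = Set.univ → Finite I → Nat.card I ≤ n → Cancellable S A := by
  induction n with
  | zero =>
    intro A _ _ I T hind hdisj hcover hfin hcard
    exfalso
    obtain ⟨a⟩ := ‹Nonempty A›
    have ha : a ∈ ⋃ i, T i := hcover ▸ Set.mem_univ a
    obtain ⟨i0, hai0⟩ := Set.mem_iUnion.1 ha
    haveI : Nonempty I := ⟨i0⟩
    have := Nat.card_pos (α := I)
    omega
  | succ n ih =>
    intro A _ _ I T hind hdisj hcover hfin hcard
    obtain ⟨a⟩ := ‹Nonempty A›
    have ha : a ∈ ⋃ i, T i := hcover ▸ Set.mem_univ a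
    obtain ⟨i0, hai0⟩ := Set.mem_iUnion.1 ha
    haveI : Nonempty I := ⟨i0⟩
    by_cases hall : ∀ j : I, j = i0
    · -- only one component : `A` itself is indecomposable
      have hTuniv : T i0 = Set.univ := by
        rw [← hcover]
        ext x
        rw [Set.mem_iUnion]
        exact ⟨fun h => ⟨i0, h⟩, fun ⟨j, hj⟩ => (hall j) ▸ hj⟩
      apply cancellable_of_connTotal
      apply connTotal_of_no_split
      rintro ⟨U, V, hU, hV, huv, hdis⟩
      exact (hind i0).2 ⟨U, V, hU, hV, by rw [huv, hTuniv], hdis⟩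
    · push_neg at hall
      obtain ⟨j0, hj0⟩ := hall
      -- split off the component `T i0`
      set Uset : Set A := ⋃ j : {j : I // j ≠ i0}, T j.val with hUset
      have hTsub : ∀ j : I, j ≠ i0 → T j ⊆ Uset := by
        intro j hj x hx
        exact Set.mem_iUnion.2 ⟨⟨j, hj⟩, hx⟩
      have hUsub : IsSubact S Uset := by
        constructor
        · obtain ⟨b, hb⟩ := (hind j0).1.1
          exact ⟨b, hTsub j0 hj0 hb⟩
        · intro x hx s
          obtain ⟨j, hj⟩ := Set.mem_iUnion.1 hx
          exact hTsub j.val j.prop ((hind j.val).1.2 x hj s)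
      letI rA' : RAct S Uset := hUsub.ract
      haveI : Nonempty Uset := hUsub.1.to_subtype
      letI rB1 : RAct S (T i0) := (hind i0).1.ract
      haveI : Nonempty (T i0) := (hind i0).1.1.to_subtype
      set I' := {j : I // j ≠ i0} with hI'
      set T' : I' → Set Uset := fun j => Subtype.val ⁻¹' (T j.val) with hT'
      have hval : ∀ (x : Uset) (s : S), (RAct.act x s).val = RAct.act x.val s := fun x s => rfl
      have hind' : ∀ j, IndecompSubact S (T' j) := by
        intro j
        constructor
        · constructor
          · obtain ⟨b, hb⟩ := (hind j.val).1.1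
            exact ⟨⟨b, hTsub j.val j.prop hb⟩, hb⟩
          · intro x hx s
            show (RAct.act x s).val ∈ T j.val
            rw [hval]
            exact (hind j.val).1.2 x.val hx s
        · rintro ⟨U, V, hU, hV, huv, hdis⟩
          refine (hind j.val).2 ⟨Subtype.val '' U, Subtype.val '' V, ?_, ?_, ?_, ?_⟩
          · refine ⟨hU.1.image _, ?_⟩
            rintro _ ⟨u, hu, rfl⟩ s
            exact ⟨_, hU.2 u hu s, (hval u s).symm ▸ rfl⟩
          · refine ⟨hV.1.image _, ?_⟩
            rintro _ ⟨v, hv, rfl⟩ s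
            exact ⟨_, hV.2 v hv s, (hval v s).symm ▸ rfl⟩
          · rw [← Set.image_union, huv]
            rw [Set.image_preimage_eq_inter_range, Subtype.range_val]
            exact Set.inter_eq_self_of_subset_left (hTsub j.val j.prop)
          · rw [← Set.image_inter Subtype.val_injective, hdis, Set.image_empty]
      have hdisj' : ∀ i j : I', i ≠ j → T' i ∩ T' j = ∅ := by
        intro i j hij
        have : i.val ≠ j.val := fun h => hij (Subtype.ext h)
        rw [hT']
        simp only []
        rw [← Set.preimage_inter, hdisj i.val j.val this, Set.preimage_empty]
      have hcover' : (⋃ j, T' j) = Set.univ := by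
        ext x
        simp only [Set.mem_univ, iff_true, Set.mem_iUnion]
        obtain ⟨j, hj⟩ := Set.mem_iUnion.1 x.prop
        exact ⟨j, hj⟩
      haveI hfinI' : Finite I' := Subtype.finite
      have hcard' : Nat.card I' ≤ n := by
        haveI := Fintype.ofFinite I
        letI := Classical.decEq I
        have hlt : Nat.card I' < Nat.card I := by
          rw [Nat.card_eq_fintype_card, Nat.card_eq_fintype_card]
          exact Fintype.card_subtype_lt (x := i0) (by simp)
        omega
      have hcanc' : Cancellable S Uset := ih Uset I' T' hind' hdisj' hcover' hfinI' hcard'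
      have htot : ConnTotal S (T i0) := connTotal_of_indecomp (hind i0)
      have hcancSum : Cancellable S ((T i0) ⊕ Uset) := cancellable_sum htot hcanc'
      -- the equivariant isomorphism `A ≃ T i0 ⊕ Uset`
      have hnotmem : ∀ (x : A) (s : S), x ∉ T i0 → RAct.act x s ∉ T i0 := by
        intro x s hx hxs
        have hx' : x ∈ ⋃ i, T i := hcover ▸ Set.mem_univ x
        obtain ⟨k, hk⟩ := Set.mem_iUnion.1 hx'
        have hki0 : k ≠ i0 := fun h => hx (h ▸ hk)
        have : RAct.act x s ∈ T k ∩ T i0 := ⟨(hind k).1.2 x hk s, hxs⟩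
        rw [hdisj k i0 hki0] at this
        exact this
      have hmemU : ∀ x : A, x ∉ T i0 → x ∈ Uset := by
        intro x hx
        have hx' : x ∈ ⋃ i, T i := hcover ▸ Set.mem_univ x
        obtain ⟨k, hk⟩ := Set.mem_iUnion.1 hx'
        have hki0 : k ≠ i0 := fun h => hx (h ▸ hk)
        exact hTsub k hki0 hk
      letI : DecidablePred (· ∈ T i0) := fun _ => Classical.propDecidable _
      have hΦ : ∃ Φ : A ≃ ((T i0) ⊕ Uset), IsEquivariant S ⇑Φ := by
        refine ⟨⟨fun x => if h : x ∈ T i0 then Sum.inl ⟨x, h⟩ else Sum.inr ⟨x, hmemU x h⟩,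
                 Sum.elim Subtype.val Subtype.val, ?_, ?_⟩, ?_⟩
        · intro x
          by_cases h : x ∈ T i0 <;> simp [h]
        · rintro (⟨x, hx⟩ | ⟨x, hx⟩)
          · simp [hx]
          · have hxn : x ∉ T i0 := by
              intro hmem
              obtain ⟨k, hk⟩ := Set.mem_iUnion.1 hx
              have hki0 : (k : I) ≠ i0 := k.prop
              have : x ∈ T k.val ∩ T i0 := ⟨hk, hmem⟩
              rw [hdisj k.val i0 hki0] at this
              exact this
            simp [hxn]
        · intro x s
          by_cases h : x ∈ T i0
          · have h2 : RAct.act x s ∈ T i0 := (hind i0).1.2 x h s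
            simp only [Equiv.coe_fn_mk]
            rw [dif_pos h, dif_pos h2]
            rfl
          · have h2 : RAct.act x s ∉ T i0 := hnotmem x s h
            simp only [Equiv.coe_fn_mk]
            rw [dif_neg h, dif_neg h2]
            rfl
      obtain ⟨Φ, hΦe⟩ := hΦ
      exact cancellable_congr hΦe hcancSum
theorem sigma_subtype_ext {A : Type v} {I : Type w} {G : I → Set A} {i j : I}
    {x : G i} {y : G j} (h : i = j) (hxy : x.val = y.val) :
    (⟨i, x⟩ : Σ k, G k) = ⟨j, y⟩ := by
  subst h
  cases Subtype.ext hxy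
  rfl

theorem subactIso_refl {A : Type v} [RAct S A] {T : Set A} (hT : IsSubact S T) :
    SubactIso hT hT := ⟨Equiv.refl _, fun _ _ => rfl⟩

/-- Forward direction: an act with infinitely many components in a single
isomorphism class is not cancellable. -/
theorem not_cancellable_of_infinite {A : Type u} [RAct S A] [Nonempty A] {I : Type u}
    (T : I → Set A) (hind : ∀ i, IndecompSubact S (T i))
    (hdisj : ∀ i j, i ≠ j → T i ∩ T j = ∅) (hcover : (⋃ i, T i) = Set.univ)
    (i0 : I) (hX : {j : I | SubactIso (hind i0).1 (hind j).1}.Infinite)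
    (hcanc : Cancellable S A) : False := by
  classical
  set X := {j : I | SubactIso (hind i0).1 (hind j).1} with hXdef
  letI FInst : ∀ j : I, RAct S (T j) := fun j => (hind j).1.ract
  haveI hBne : Nonempty (T i0) := (hind i0).1.1.to_subtype
  have hpsi : ∀ j : X, ∃ e : (T i0) ≃ (T j.val), IsEquivariant S ⇑e := fun j => j.prop
  choose ψ hψ using hpsi
  haveI hXinf : Infinite X := hX.to_subtype
  obtain ⟨τ₀⟩ : Nonempty (Option X ≃ X) := Cardinal.eq.1 (by
    rw [Cardinal.mk_option]
    exact Cardinal.add_one_eq (Cardinal.aleph0_le_mk _))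
  set τ : (X ⊕ PUnit.{u+1}) ≃ X := (Equiv.optionEquivSumPUnit (↥X)).symm.trans τ₀ with hτ
  -- the index of the component containing a point
  have hexists : ∀ a : A, ∃ i, a ∈ T i := fun a => Set.mem_iUnion.1 (hcover ▸ Set.mem_univ a)
  choose idx hidx using hexists
  have uniq : ∀ {a : A} {i : I}, a ∈ T i → idx a = i := by
    intro a i h
    by_contra hne
    have hmem : a ∈ T (idx a) ∩ T i := ⟨hidx a, h⟩
    rw [hdisj _ _ hne] at hmem
    exact hmem
  -- the canonical decomposition equivalence
  have hd : ∃ d : A ≃ (Σ j : I, (T j)), IsEquivariant S ⇑d := by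
    refine ⟨⟨fun a => ⟨idx a, ⟨a, hidx a⟩⟩, fun p => p.2.val, fun a => rfl, ?_⟩, ?_⟩
    · rintro ⟨j, x, hx⟩
      obtain rfl := uniq hx
      rfl
    · intro a s
      exact sigma_subtype_ext (uniq ((hind (idx a)).1.2 a (hidx a) s)) rfl
  obtain ⟨d, hd'⟩ := hd
  -- split the decomposition according to membership in `X`
  have he1 : ∃ e : (Σ j : I, (T j)) ≃
      ((Σ j : X, (T j.val)) ⊕ (Σ j : {j : I // j ∉ X}, (T j.val))),
      IsEquivariant S ⇑e := by
    refine ⟨⟨fun p => if h : p.1 ∈ X then Sum.inl ⟨⟨p.1, h⟩, p.2⟩ else Sum.inr ⟨⟨p.1, h⟩, p.2⟩,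
             Sum.elim (fun p => ⟨p.1.1, p.2⟩) (fun p => ⟨p.1.1, p.2⟩), ?_, ?_⟩, ?_⟩
    · rintro ⟨j, x⟩
      dsimp only
      by_cases h : j ∈ X
      · rw [dif_pos h]; rfl
      · rw [dif_neg h]; rfl
    · rintro (⟨⟨j, h⟩, x⟩ | ⟨⟨j, h⟩, x⟩)
      · dsimp only [Sum.elim_inl]
        rw [dif_pos h]
      · dsimp only [Sum.elim_inr]
        rw [dif_neg h]
    · rintro ⟨j, x⟩ s
      show (if h : j ∈ X then _ else _) = RAct.act (if h : j ∈ X then _ else _) s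
      by_cases h : j ∈ X
      · rw [dif_pos h, dif_pos h]; rfl
      · rw [dif_neg h, dif_neg h]; rfl
  obtain ⟨e1, he1'⟩ := he1
  -- the `X`-indexed part is a product
  have he2 : ∃ e : (Σ j : X, (T j.val)) ≃ (X × (T i0)), IsEquivariant S ⇑e := by
    refine ⟨⟨fun p => (p.1, (ψ p.1).symm p.2), fun q => ⟨q.1, ψ q.1 q.2⟩, ?_, ?_⟩, ?_⟩
    · rintro ⟨j, x⟩
      dsimp only
      rw [Equiv.apply_symm_apply]
    · rintro ⟨j, b⟩
      dsimp only
      rw [Equiv.symm_apply_apply]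
    · rintro ⟨j, x⟩ s
      exact congrArg (Prod.mk j) (equivariant_symm (hψ j) x s)
  obtain ⟨e2, he2'⟩ := he2
  -- absorb one extra copy of `T i0` using the infinite index set
  have he3 : ∃ e : ((X × (T i0)) ⊕ (T i0)) ≃ (X × (T i0)), IsEquivariant S ⇑e := by
    refine ⟨⟨Sum.elim (fun q => (τ (Sum.inl q.1), q.2)) (fun b => (τ (Sum.inr PUnit.unit), b)),
             fun q => Sum.elim (fun k => Sum.inl (k, q.2)) (fun _ => Sum.inr q.2) (τ.symm q.1),
             ?_, ?_⟩, ?_⟩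
    · rintro (⟨j, b⟩ | b)
      · dsimp only [Sum.elim_inl]
        rw [Equiv.symm_apply_apply]
        rfl
      · dsimp only [Sum.elim_inr]
        rw [Equiv.symm_apply_apply]
        rfl
    · rintro ⟨xq, b⟩
      dsimp only
      rcases hh : τ.symm xq with k | u
      · dsimp only [Sum.elim_inl]
        rw [← hh, Equiv.apply_symm_apply]
      · dsimp only [Sum.elim_inr]
        cases u
        rw [← hh, Equiv.apply_symm_apply]
    · rintro (⟨j, b⟩ | b) s <;> rfl
  obtain ⟨e3, he3'⟩ := he3
  -- assemble the absorption equivalence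
  have he4' : IsEquivariant S ⇑((e2.sumCongr (Equiv.refl (T i0))).trans (e3.trans e2.symm)) :=
    equivariant_trans (equivariant_sumCongr he2' equivariant_refl)
      (equivariant_trans he3' (equivariant_symm he2'))
  have hμ' : IsEquivariant S
      ⇑((e1.sumCongr (Equiv.refl (T i0))).trans
        ((Equiv.sumAssoc _ _ _).trans
        (((Equiv.refl _).sumCongr (Equiv.sumComm _ _)).trans
        ((Equiv.sumAssoc _ _ _).symm.trans
        ((((e2.sumCongr (Equiv.refl (T i0))).trans (e3.trans e2.symm)).sumCongr
            (Equiv.refl _)).trans e1.symm))))) :=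
    equivariant_trans (equivariant_sumCongr he1' equivariant_refl)
      (equivariant_trans (equivariant_sumAssoc _ _ _)
      (equivariant_trans (equivariant_sumCongr equivariant_refl (equivariant_sumComm _ _))
      (equivariant_trans (equivariant_symm (equivariant_sumAssoc _ _ _))
      (equivariant_trans (equivariant_sumCongr he4' equivariant_refl)
        (equivariant_symm he1')))))
  set μ := ((e1.sumCongr (Equiv.refl (T i0))).trans
        ((Equiv.sumAssoc _ _ _).trans
        (((Equiv.refl _).sumCongr (Equiv.sumComm _ _)).trans
        ((Equiv.sumAssoc _ _ _).symm.trans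
        ((((e2.sumCongr (Equiv.refl (T i0))).trans (e3.trans e2.symm)).sumCongr
            (Equiv.refl _)).trans e1.symm))))) with hμdef
  have hω' : IsEquivariant S ⇑((d.sumCongr (Equiv.refl (T i0))).trans (μ.trans d.symm)) :=
    equivariant_trans (equivariant_sumCongr hd' equivariant_refl)
      (equivariant_trans hμ' (equivariant_symm hd'))
  set ω := (d.sumCongr (Equiv.refl (T i0))).trans (μ.trans d.symm) with hωdef
  have hE' : IsEquivariant S
      ⇑((Equiv.sumAssoc A (T i0) (T i0)).symm.trans (ω.sumCongr (Equiv.refl (T i0)))) :=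
    equivariant_trans (equivariant_symm (equivariant_sumAssoc _ _ _))
      (equivariant_sumCongr hω' equivariant_refl)
  set E := (Equiv.sumAssoc A (T i0) (T i0)).symm.trans (ω.sumCongr (Equiv.refl (T i0)))
    with hEdef
  have hiso : ActIso S (A ⊕ (T i0)) (A ⊕ ((T i0) ⊕ (T i0))) :=
    ⟨E.symm, equivariant_symm hE'⟩
  have hBC := hcanc (T i0) ((T i0) ⊕ (T i0)) hiso
  obtain ⟨g, hg'⟩ := hBC
  have htot : ConnTotal S (T i0) := connTotal_of_indecomp (hind i0)
  exact not_connTotal_sum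
    (connTotal_of_surjective (hg' : IsEquivariant S ⇑g) g.surjective htot)

end Theory

/-- Let `A = ⨆_{i ∈ I} A_i` be the decomposition of `A` into
indecomposable subacts, and suppose the quotient `I/∼` (where `i ∼ j` iff `A_i ≅ A_j`)
is finite. Then `A` is cancellable iff `A` is finitely decomposable, i.e. `I` is finite. -/
theorem cancellable_iff_finitelyDecomposable (S : Type u) [Monoid S] (A : Type u)
    [RAct S A] [Nonempty A] (I : Type u) (T : I → Set A)
    (hind : ∀ i, IndecompSubact S (T i))
    (hdisj : ∀ i j, i ≠ j → T i ∩ T j = ∅)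
    (hcover : (⋃ i, T i) = Set.univ)
    (hquot : {C : Set I |
      ∃ i : I, C = {j : I | SubactIso (hind i).1 (hind j).1}}.Finite) :
    Cancellable S A ↔ Finite I := by
  constructor
  · intro hcanc
    by_contra hnf
    rw [not_finite_iff_infinite] at hnf
    have hcl : ∀ i : I, SubactIso (hind i).1 (hind i).1 := fun i => subactIso_refl _
    have hex : ∃ C ∈ {C : Set I |
        ∃ i : I, C = {j : I | SubactIso (hind i).1 (hind j).1}}, C.Infinite := by
      by_contra h
      push_neg at h
      have hsub : (Set.univ : Set I) ⊆ ⋃ C ∈ {C : Set I |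
          ∃ i : I, C = {j : I | SubactIso (hind i).1 (hind j).1}}, C :=
        fun i _ => Set.mem_biUnion ⟨i, rfl⟩ (hcl i)
      have hfin : (Set.univ : Set I).Finite :=
        (hquot.biUnion fun C hC => h C hC).subset hsub
      exact Set.infinite_univ hfin
    obtain ⟨C, hC, hCinf⟩ := hex
    obtain ⟨i0, rfl⟩ := hC
    exact (not_cancellable_of_infinite T hind hdisj hcover i0 hCinf hcanc).elim
  · intro hfin
    exact cancellable_of_finite (Nat.card I) A I T hind hdisj hcover hfin le_rfl
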